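/- Let A = ℂ[T] be the polynomial ring with the ℤ-action where the generator g acts by g·f(T) = f(T − 2πi) composed with multiplication by a fixed scalar e^{2πiα} for a real number α. Then the group cohomology H^m(ℤ, A) vanishes for all m ≥ 1; moreover H^0(ℤ, A) = ℂ if α ∈ ℤ and H^0(ℤ, A) = 0 if α ∉ ℤ. -/
import Mathlib
open Polynomial

lemma myker1 (c : ℂ) (hc : c ≠ 0) (f : ℂ[X]) (h : f.comp (X - C c) = f) :
    ∃ b : ℂ, f = C b := by
  have heval : ∀ x : ℂ, f.eval (x - c) = f.eval x := by
    intro x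
    conv_rhs => rw [← h]
    simp [eval_comp]
  have key : ∀ n : ℕ, f.eval (-(n : ℂ) * c) = f.eval 0 := by
    intro n
    induction n with
    | zero => simp
    | succ n ih =>
      have h2 := heval (-(n : ℂ) * c)
      rw [ih] at h2
      have h3 : (-(((n+1 : ℕ)) : ℂ)) * c = -(n:ℂ)*c - c := by push_cast; ring
      rw [h3, h2]
  set g := f - C (f.eval 0) with hg
  have hroots : ∀ n : ℕ, g.IsRoot (-(n : ℂ) * c) := by
    intro n
    simpa [hg, IsRoot, sub_eq_zero, neg_mul] using key n
  have hinf : {x : ℂ | g.IsRoot x}.Infinite := by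
    apply Set.Infinite.mono (s := Set.range (fun n : ℕ => -(n : ℂ) * c))
    · rintro x ⟨n, rfl⟩; exact hroots n
    · apply Set.infinite_range_of_injective
      intro p q hpq
      simp only [neg_mul, neg_inj, mul_eq_mul_right_iff] at hpq
      rcases hpq with h1 | h1
      · exact_mod_cast h1
      · exact absurd h1 hc
  have hg0 : g = 0 := Polynomial.eq_zero_of_infinite_isRoot g hinf
  exact ⟨f.eval 0, (sub_eq_zero.mp hg0)⟩

lemma Lsplit (l : ℂ) (q f₀ f₁ : ℂ[X]) :
    l • (f₀ + f₁).comp q - (f₀ + f₁) =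
      (l • f₀.comp q - f₀) + (l • f₁.comp q - f₁) := by
  rw [add_comp, smul_eq_C_mul, smul_eq_C_mul, smul_eq_C_mul]
  ring

lemma mysurj (l c : ℂ) (hc : c ≠ 0) :
    ∀ n : ℕ, ∀ g : ℂ[X], g.natDegree ≤ n →
      ∃ f : ℂ[X], l • f.comp (X - C c) - f = g := by
  intro n
  induction n using Nat.strong_induction_on with
  | _ n ih =>
  intro g hg
  by_cases hg0 : g = 0
  · exact ⟨0, by simp [hg0]⟩
  set N := g.natDegree with hN
  set a := g.leadingCoeff with ha
  have ha0 : a ≠ 0 := leadingCoeff_ne_zero.mpr hg0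
  have hx : (X - C c : ℂ[X]) = X + C (-c) := by rw [map_neg, sub_eq_add_neg]
  by_cases hl : l = 1
  · -- l = 1 case: f₀ = C s * X^(N+1)
    have hden : -((N:ℂ)+1) * c ≠ 0 := by
      apply mul_ne_zero _ hc
      simp only [neg_ne_zero]
      exact Nat.cast_add_one_ne_zero N
    set s : ℂ := a / (-((N:ℂ)+1) * c) with hs
    set f₀ : ℂ[X] := C s * X ^ (N + 1) with hf₀
    set t : ℂ[X] := l • f₀.comp (X - C c) - f₀ with ht
    have hcomp : f₀.comp (X - C c) = C s * (X - C c) ^ (N + 1) := by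
      simp [hf₀, mul_comp, X_pow_comp]
    have hcN : t.coeff N = a := by
      rw [ht, hl, one_smul, hcomp, hf₀, hx]
      simp only [coeff_sub, coeff_C_mul, coeff_X_add_C_pow, coeff_X_pow]
      rw [if_neg (by omega)]
      have h4 : (-c) ^ (N + 1 - N) * (((N+1).choose N : ℕ) : ℂ) = -((N:ℂ)+1) * c := by
        rw [Nat.succ_sub le_rfl, Nat.sub_self, pow_one, Nat.choose_succ_self_right]
        push_cast; ring
      rw [h4]
      have hsa : s * (-((N:ℂ)+1) * c) = a := div_mul_cancel₀ a hden
      linear_combination hsa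
    have hcgt : ∀ k, N < k → t.coeff k = 0 := by
      intro k hk
      rw [ht, hl, one_smul, hcomp, hf₀, hx]
      simp only [coeff_sub, coeff_C_mul, coeff_X_add_C_pow, coeff_X_pow]
      rcases eq_or_lt_of_le (Nat.succ_le_of_lt hk) with h1 | h1
      · rw [if_pos h1.symm, ← h1, Nat.sub_self, pow_zero, Nat.choose_self]
        push_cast; ring
      · rw [if_neg (by omega), Nat.choose_eq_zero_of_lt h1]
        push_cast; ring
    set d : ℂ[X] := g - t with hd
    have hdgt : ∀ k, N ≤ k → d.coeff k = 0 := by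
      intro k hk
      rcases eq_or_lt_of_le hk with h1 | h1
      · rw [hd, coeff_sub, ← h1, hcN, ha, hN, coeff_natDegree, sub_self]
      · rw [hd, coeff_sub, hcgt k h1, sub_zero]
        exact coeff_eq_zero_of_natDegree_lt (by omega)
    rcases Nat.eq_zero_or_pos N with hN0 | hNpos
    · have hdz : d = 0 := by
        ext k
        rw [coeff_zero, hdgt k (by omega)]
      exact ⟨f₀, (sub_eq_zero.mp (show g - t = 0 from hdz)).symm⟩
    · have hdle : d.natDegree ≤ N - 1 := by
        rw [natDegree_le_iff_coeff_eq_zero]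
        intro m hm
        exact hdgt m (by omega)
      obtain ⟨f₁, hf₁⟩ := ih (N - 1) (by omega) d hdle
      refine ⟨f₀ + f₁, ?_⟩
      rw [Lsplit, hf₁, ← ht, hd]
      ring
  · -- l ≠ 1 case: f₀ = C s * X^N
    have hden : l - 1 ≠ 0 := sub_ne_zero.mpr hl
    set s : ℂ := a / (l - 1) with hs
    set f₀ : ℂ[X] := C s * X ^ N with hf₀
    set t : ℂ[X] := l • f₀.comp (X - C c) - f₀ with ht
    have hcomp : f₀.comp (X - C c) = C s * (X - C c) ^ N := by
      simp [hf₀, mul_comp, X_pow_comp]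
    have hcN : t.coeff N = a := by
      rw [ht, hcomp, hf₀, hx]
      simp only [coeff_smul, coeff_sub, coeff_C_mul, coeff_X_add_C_pow, coeff_X_pow,
        smul_eq_mul]
      simp only [if_true, Nat.sub_self, pow_zero, Nat.choose_self, Nat.cast_one, mul_one, one_mul]
      have hsa : s * (l - 1) = a := div_mul_cancel₀ a hden
      linear_combination hsa
    have hcgt : ∀ k, N < k → t.coeff k = 0 := by
      intro k hk
      rw [ht, hcomp, hf₀, hx]
      simp only [coeff_smul, coeff_sub, coeff_C_mul, coeff_X_add_C_pow, coeff_X_pow,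
        smul_eq_mul]
      rw [if_neg (by omega), Nat.choose_eq_zero_of_lt hk]
      push_cast; ring
    set d : ℂ[X] := g - t with hd
    have hdgt : ∀ k, N ≤ k → d.coeff k = 0 := by
      intro k hk
      rcases eq_or_lt_of_le hk with h1 | h1
      · rw [hd, coeff_sub, ← h1, hcN, ha, hN, coeff_natDegree, sub_self]
      · rw [hd, coeff_sub, hcgt k h1, sub_zero]
        exact coeff_eq_zero_of_natDegree_lt (by omega)
    rcases Nat.eq_zero_or_pos N with hN0 | hNpos
    · have hdz : d = 0 := by
        ext k
        rw [coeff_zero, hdgt k (by omega)]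
      exact ⟨f₀, (sub_eq_zero.mp (show g - t = 0 from hdz)).symm⟩
    · have hdle : d.natDegree ≤ N - 1 := by
        rw [natDegree_le_iff_coeff_eq_zero]
        intro m hm
        exact hdgt m (by omega)
      obtain ⟨f₁, hf₁⟩ := ih (N - 1) (by omega) d hdle
      refine ⟨f₀ + f₁, ?_⟩
      rw [Lsplit, hf₁, ← ht, hd]
      ring

lemma myker2 (l c : ℂ) (hl : l ≠ 1) (f : ℂ[X])
    (h : l • f.comp (X - C c) = f) : f = 0 := by
  by_contra hf
  have hcomp0 : f.comp (X - C c) ≠ 0 := fun h0 => by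
    rw [h0, smul_zero] at h; exact hf h.symm
  have hdeg : (X - C c : ℂ[X]).natDegree ≠ 0 := by
    rw [natDegree_X_sub_C]; omega
  have hlc : (l • f.comp (X - C c)).leadingCoeff = l * f.leadingCoeff := by
    rw [smul_eq_C_mul, leadingCoeff_mul, leadingCoeff_C,
      leadingCoeff_comp hdeg, leadingCoeff_X_sub_C, one_pow, mul_one]
  rw [h] at hlc
  have : (l - 1) * f.leadingCoeff = 0 := by linear_combination -hlc
  rcases mul_eq_zero.mp this with h1 | h1
  · exact hl (by linear_combination h1)
  · exact hf (leadingCoeff_eq_zero.mp h1)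

/-- Let `ℤ` act on `ℂ[T]` by letting the generator send `f(T)` to `e^{2πiα}·f(T − 2πi)`.
Then `H^m(ℤ, ℂ[T]) = 0` for `m ≥ 1`, and `H^0(ℤ, ℂ[T])` is `ℂ` if `α ∈ ℤ` and `0` otherwise.
Since group cohomology of `ℤ` is computed by the two-term complex `g − 1 : ℂ[T] → ℂ[T]`,
this says: the map `f(T) ↦ e^{2πiα}·f(T − 2πi) − f(T)` is surjective, with kernel the
constants if `α ∈ ℤ` and kernel `0` if `α ∉ ℤ`. -/
theorem stmt_4 (α : ℝ)
    (L : Polynomial ℂ → Polynomial ℂ)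
    (hL : ∀ f : Polynomial ℂ, L f =
      Complex.exp (2 * (Real.pi : ℂ) * Complex.I * (α : ℂ)) •
          f.comp (X - C (2 * (Real.pi : ℂ) * Complex.I)) - f) :
    Function.Surjective L ∧
      ((∃ m : ℤ, α = (m : ℝ)) → ∀ f, L f = 0 ↔ ∃ c : ℂ, f = C c) ∧
      (¬(∃ m : ℤ, α = (m : ℝ)) → ∀ f, L f = 0 ↔ f = 0) := by
  set l : ℂ := Complex.exp (2 * (Real.pi : ℂ) * Complex.I * (α : ℂ)) with hl
  set c : ℂ := 2 * (Real.pi : ℂ) * Complex.I with hcdef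
  have hc : c ≠ 0 := by
    rw [hcdef]
    apply mul_ne_zero (mul_ne_zero two_ne_zero _) Complex.I_ne_zero
    exact_mod_cast Real.pi_ne_zero
  have hlone : l = 1 ↔ ∃ m : ℤ, α = (m : ℝ) := by
    rw [hl, Complex.exp_eq_one_iff]
    constructor
    · rintro ⟨m, hm⟩
      refine ⟨m, ?_⟩
      have h2 : (α : ℂ) = (m : ℂ) := by
        have hmc : 2 * (Real.pi : ℂ) * Complex.I * (α : ℂ)
            = 2 * (Real.pi : ℂ) * Complex.I * (m : ℂ) := by rw [hm]; ring
        exact mul_left_cancel₀ hc hmc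
      exact_mod_cast h2
    · rintro ⟨m, hm⟩
      exact ⟨m, by rw [hm]; push_cast; ring⟩
  refine ⟨?_, ?_, ?_⟩
  · intro g
    obtain ⟨f, hf⟩ := mysurj l c hc g.natDegree g le_rfl
    exact ⟨f, by rw [hL]; exact hf⟩
  · rintro hm f
    have hl1 : l = 1 := hlone.mpr hm
    rw [hL f, hl1, one_smul, sub_eq_zero]
    constructor
    · intro h; exact myker1 c hc f h
    · rintro ⟨b, rfl⟩
      simp
  · intro hm f
    have hl1 : l ≠ 1 := fun h => hm (hlone.mp h)
    rw [hL f, sub_eq_zero]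
    constructor
    · intro h; exact myker2 l c hl1 f h
    · rintro rfl; simp
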